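/- Let 𝔇 ≥ 1 be an integer, p an odd prime not dividing 𝔇 such that −𝔇 is NOT a square modulo p, and x, y, n integers with p ∤ n. Then the number of quadruples (c₁, c₂, d₁, d₂) ∈ (ℤ/pℤ)⁴ whose associated pair (c, d) in R = ℤ[√−𝔇]/(p) is unimodular and which satisfy A·x² + B·y² + C·x + D·y + E ≡ n (mod p) equals p³ − p; consequently this count divided by the total number p⁴ − 1 of unimodular pairs equals p/(p² + 1). Here A = c₁² + 𝔇c₂², B = 𝔇A, C = 2(c₁d₁ + 𝔇c₂d₂), D = 2𝔇(c₁d₂ − c₂d₁), E = A + d₁² + 𝔇d₂². -/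

import Mathlib

open Finset Polynomial

/-- The ring `ℤ[√−𝔇]`, modelled as `ℤ[X]/(X² + 𝔇)`. -/
abbrev ZsqrtNeg (𝔇 : ℕ) : Type := AdjoinRoot ((Polynomial.X : Polynomial ℤ) ^ 2 + Polynomial.C (𝔇 : ℤ))

/-- The quotient ring `R = ℤ[√−𝔇]/(p)`. -/
abbrev Rmod (𝔇 p : ℕ) : Type := ZsqrtNeg 𝔇 ⧸ Ideal.span {(p : ZsqrtNeg 𝔇)}

/-- The image of `u + v√−𝔇` in `R = ℤ[√−𝔇]/(p)`. -/
noncomputable def toRmod (𝔇 p : ℕ) (u v : ℤ) : Rmod 𝔇 p :=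
  Ideal.Quotient.mk (Ideal.span {(p : ZsqrtNeg 𝔇)})
    ((u : ZsqrtNeg 𝔇) + (v : ZsqrtNeg 𝔇) * AdjoinRoot.root _)

/-- A quadruple `(c₁, c₂, d₁, d₂) ∈ (ℤ/pℤ)⁴` is unimodular if the associated pair
`(c₁ + c₂√−𝔇, d₁ + d₂√−𝔇)` in `R = ℤ[√−𝔇]/(p)` admits `a, b ∈ R` with `a·d − b·c = 1`. -/
def IsUnimodular (𝔇 p : ℕ) (v : ZMod p × ZMod p × ZMod p × ZMod p) : Prop :=
  ∃ a b : Rmod 𝔇 p,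
    a * toRmod 𝔇 p (v.2.2.1.val : ℤ) (v.2.2.2.val : ℤ)
      - b * toRmod 𝔇 p (v.1.val : ℤ) (v.2.1.val : ℤ) = 1

/-- The congruence `A x² + B y² + C x + D y + E = n` in `ℤ/pℤ` for the quadruple
`v = (c₁, c₂, d₁, d₂)`. -/
def QuadCongr (𝔇 p : ℕ) (x y n : ℤ) (v : ZMod p × ZMod p × ZMod p × ZMod p) : Prop :=
  (v.1 ^ 2 + (𝔇 : ZMod p) * v.2.1 ^ 2) * (x : ZMod p) ^ 2
    + ((𝔇 : ZMod p) * (v.1 ^ 2 + (𝔇 : ZMod p) * v.2.1 ^ 2)) * (y : ZMod p) ^ 2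
    + (2 * (v.1 * v.2.2.1 + (𝔇 : ZMod p) * v.2.1 * v.2.2.2)) * (x : ZMod p)
    + (2 * (𝔇 : ZMod p) * (v.1 * v.2.2.2 - v.2.1 * v.2.2.1)) * (y : ZMod p)
    + ((v.1 ^ 2 + (𝔇 : ZMod p) * v.2.1 ^ 2) + v.2.2.1 ^ 2 + (𝔇 : ZMod p) * v.2.2.2 ^ 2)
    = (n : ZMod p)

/-! ### Auxiliary counting lemmas over `ZMod p` -/

section Count
variable {p : ℕ} [Fact p.Prime]

/-- The binary quadratic form `a² + δ b²`. -/
def qf (δ : ZMod p) (c : ZMod p × ZMod p) : ZMod p := c.1 ^ 2 + δ * c.2 ^ 2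

lemma qf_eq_zero_iff {δ : ZMod p} (hns : ¬ IsSquare (-δ)) (c : ZMod p × ZMod p) :
    qf δ c = 0 ↔ c = 0 := by
  constructor
  · intro h
    by_cases hb : c.2 = 0
    · have : c.1 ^ 2 = 0 := by simpa [qf, hb] using h
      have h1 : c.1 = 0 := pow_eq_zero_iff (n := 2) (by norm_num) |>.mp this
      exact Prod.ext h1 hb
    · exfalso
      apply hns
      refine ⟨c.1 * c.2⁻¹, ?_⟩
      have hc2 : (c.2 : ZMod p) ≠ 0 := hb
      field_simp
      unfold qf at h
      linear_combination -h
  · rintro rfl; simp [qf]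

lemma qf_surj {δ : ZMod p} (hδ : δ ≠ 0) (t : ZMod p) : ∃ c, qf δ c = t := by
  by_cases hsq : IsSquare δ
  · obtain ⟨e, he⟩ := hsq
    have he' : e ≠ 0 := by rintro rfl; simp at he; exact hδ he
    obtain ⟨a, b, hab⟩ := ZMod.sq_add_sq p t
    refine ⟨(a, b / e), ?_⟩
    unfold qf
    rw [he]
    field_simp
    linear_combination hab
  · by_cases ht : t = 0
    · exact ⟨0, by simp [qf, ht]⟩
    by_cases htsq : IsSquare t
    · obtain ⟨s, hs⟩ := htsq
      exact ⟨(s, 0), by simp [qf, hs, sq]⟩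
    · have h1 : IsSquare (δ⁻¹ * t) := by
        have hδi : δ⁻¹ ≠ 0 := inv_ne_zero hδ
        rw [← quadraticChar_one_iff_isSquare (mul_ne_zero hδi ht)]
        have hχδ : quadraticChar (ZMod p) δ = -1 :=
          quadraticChar_neg_one_iff_not_isSquare.mpr hsq
        have hχt : quadraticChar (ZMod p) t = -1 :=
          quadraticChar_neg_one_iff_not_isSquare.mpr htsq
        have hinv : quadraticChar (ZMod p) δ * quadraticChar (ZMod p) δ⁻¹ = 1 := by
          rw [← map_mul, mul_inv_cancel₀ hδ, map_one]
        have hχδi : quadraticChar (ZMod p) δ⁻¹ = -1 := by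
          rw [hχδ] at hinv; linarith
        rw [map_mul, hχδi, hχt]; norm_num
      obtain ⟨r, hr⟩ := h1
      refine ⟨(0, r), ?_⟩
      unfold qf
      simp only [Prod.fst, Prod.snd]
      have : δ * (r * r) = δ * (δ⁻¹ * t) := by rw [← hr]
      rw [mul_inv_cancel_left₀ hδ] at this
      simpa [sq, mul_assoc] using this

/-- Number of representations of `t` by the form. -/
def Nq (δ : ZMod p) (t : ZMod p) : ℕ :=
  (Finset.univ.filter (fun c : ZMod p × ZMod p => qf δ c = t)).card

lemma Nq_zero {δ : ZMod p} (hns : ¬ IsSquare (-δ)) : Nq δ 0 = 1 := by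
  unfold Nq
  have : (Finset.univ.filter (fun c : ZMod p × ZMod p => qf δ c = 0)) = {0} := by
    ext c; simp [qf_eq_zero_iff hns]
  rw [this, Finset.card_singleton]

lemma Nq_le {δ : ZMod p} (hδ : δ ≠ 0) {t u : ZMod p} (ht : t ≠ 0) (hu : u ≠ 0) :
    Nq δ t ≤ Nq δ u := by
  obtain ⟨e, he⟩ := qf_surj hδ (u * t⁻¹)
  have hqe : qf δ e ≠ 0 := by rw [he]; exact mul_ne_zero hu (inv_ne_zero ht)
  apply Finset.card_le_card_of_injOn
    (fun c => (c.1 * e.1 - δ * c.2 * e.2, c.1 * e.2 + c.2 * e.1))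
  · intro c hc
    simp only [Finset.mem_coe, Finset.mem_filter, Finset.mem_univ, true_and] at hc ⊢
    unfold qf at hc he ⊢
    have : (c.1 * e.1 - δ * c.2 * e.2) ^ 2 + δ * (c.1 * e.2 + c.2 * e.1) ^ 2
        = (c.1 ^ 2 + δ * c.2 ^ 2) * (e.1 ^ 2 + δ * e.2 ^ 2) := by ring
    rw [this, hc, he, ← mul_assoc, mul_comm t u, mul_assoc, mul_inv_cancel₀ ht, mul_one]
  · intro a _ b _ h
    simp only [Prod.mk.injEq] at h
    obtain ⟨h1, h2⟩ := h
    unfold qf at hqe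
    have k1 : (a.1 - b.1) * (e.1 ^ 2 + δ * e.2 ^ 2) = 0 := by
      linear_combination e.1 * h1 + δ * e.2 * h2
    have k2 : (a.2 - b.2) * (e.1 ^ 2 + δ * e.2 ^ 2) = 0 := by
      linear_combination e.1 * h2 - e.2 * h1
    have e1 : a.1 = b.1 := by
      rcases mul_eq_zero.mp k1 with h | h
      · exact sub_eq_zero.mp h
      · exact absurd h hqe
    have e2 : a.2 = b.2 := by
      rcases mul_eq_zero.mp k2 with h | h
      · exact sub_eq_zero.mp h
      · exact absurd h hqe
    exact Prod.ext e1 e2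

lemma Nq_congr {δ : ZMod p} (hδ : δ ≠ 0) {t u : ZMod p} (ht : t ≠ 0) (hu : u ≠ 0) :
    Nq δ t = Nq δ u := le_antisymm (Nq_le hδ ht hu) (Nq_le hδ hu ht)

lemma sum_Nq (δ : ZMod p) : ∑ t : ZMod p, Nq δ t = p ^ 2 := by
  have := Finset.card_eq_sum_card_fiberwise
    (f := fun c : ZMod p × ZMod p => qf δ c) (s := Finset.univ) (t := Finset.univ)
    (fun x _ => Finset.mem_univ _)
  rw [Finset.card_univ, Fintype.card_prod, ZMod.card] at this
  simpa [Nq, pow_two] using this.symm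

lemma Nq_ne_zero {δ : ZMod p} (hδ : δ ≠ 0) (hns : ¬ IsSquare (-δ)) {t : ZMod p}
    (ht : t ≠ 0) : Nq δ t = p + 1 := by
  have hp2 : 2 ≤ p := (Fact.out : p.Prime).two_le
  have hsum := sum_Nq δ
  rw [← Finset.add_sum_erase Finset.univ _ (Finset.mem_univ (0 : ZMod p))] at hsum
  rw [Nq_zero hns] at hsum
  have hconst : ∑ s ∈ Finset.univ.erase (0 : ZMod p), Nq δ s
      = (p - 1) * Nq δ t := by
    rw [Finset.sum_congr rfl (fun s hs => Nq_congr hδ (Finset.mem_erase.mp hs).1 ht)]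
    rw [Finset.sum_const, Finset.card_erase_of_mem (Finset.mem_univ _), Finset.card_univ,
      ZMod.card, smul_eq_mul]
  rw [hconst] at hsum
  have key : (p - 1) * Nq δ t = (p - 1) * (p + 1) := by
    have : (p - 1) * (p + 1) + 1 = p ^ 2 := by
      obtain ⟨m, rfl⟩ : ∃ m, p = m + 2 := ⟨p - 2, by omega⟩
      simp [Nat.add_sub_cancel]; ring
    omega
  exact Nat.eq_of_mul_eq_mul_left (by omega) key

lemma card_pairs {δ : ZMod p} (hδ : δ ≠ 0) (hns : ¬ IsSquare (-δ)) {n' : ZMod p}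
    (hn' : n' ≠ 0) :
    Nat.card {w : (ZMod p × ZMod p) × (ZMod p × ZMod p) // qf δ w.1 + qf δ w.2 = n'}
      = p ^ 3 - p := by
  classical
  have hp2 : 2 ≤ p := (Fact.out : p.Prime).two_le
  have e : {w : (ZMod p × ZMod p) × (ZMod p × ZMod p) // qf δ w.1 + qf δ w.2 = n'}
      ≃ Σ c : ZMod p × ZMod p, {d : ZMod p × ZMod p // qf δ d = n' - qf δ c} :=
    { toFun := fun w => ⟨w.1.1, w.1.2, eq_sub_of_add_eq' w.2⟩
      invFun := fun s => ⟨(s.1, s.2.1), by rw [s.2.2]; ring⟩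
      left_inv := fun w => rfl
      right_inv := fun s => rfl }
  rw [Nat.card_congr e, Nat.card_eq_fintype_card, Fintype.card_sigma]
  have hterm : ∀ c : ZMod p × ZMod p,
      Fintype.card {d : ZMod p × ZMod p // qf δ d = n' - qf δ c}
        = if qf δ c = n' then 1 else p + 1 := by
    intro c
    rw [Fintype.card_subtype]
    by_cases h : qf δ c = n'
    · rw [if_pos h]
      have h0 : n' - qf δ c = 0 := by rw [h]; ring
      simpa [Nq, h0] using Nq_zero hns
    · rw [if_neg h]
      have h0 : n' - qf δ c ≠ 0 := sub_ne_zero.mpr (Ne.symm h)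
      exact Nq_ne_zero hδ hns h0
  rw [Finset.sum_congr rfl (fun c _ => hterm c)]
  rw [Finset.sum_ite, Finset.sum_const, Finset.sum_const, smul_eq_mul, smul_eq_mul]
  have hA : (Finset.univ.filter (fun c : ZMod p × ZMod p => qf δ c = n')).card = p + 1 :=
    Nq_ne_zero hδ hns hn'
  have hB : (Finset.univ.filter (fun c : ZMod p × ZMod p => ¬ qf δ c = n')).card
      = p ^ 2 - (p + 1) := by
    have := Finset.card_filter_add_card_filter_not
      (s := (Finset.univ : Finset (ZMod p × ZMod p)))
      (p := fun c : ZMod p × ZMod p => qf δ c = n')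
    rw [hA, Finset.card_univ, Fintype.card_prod, ZMod.card, ← pow_two] at this
    omega
  rw [hA, hB]
  have h1 : p + 1 ≤ p ^ 2 := by nlinarith
  have h2 : p ≤ p ^ 3 := Nat.le_self_pow (by norm_num) p
  zify [h1, h2]
  ring

end Count

/-! ### Auxiliary algebraic lemmas about `Rmod` -/

section Alg
variable (𝔇 p : ℕ)

lemma root_sq : (AdjoinRoot.root ((X : Polynomial ℤ) ^ 2 + C (𝔇 : ℤ))) ^ 2
    = -((𝔇 : ℤ) : ZsqrtNeg 𝔇) := by
  have h := AdjoinRoot.eval₂_root ((X : Polynomial ℤ) ^ 2 + C (𝔇 : ℤ))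
  rw [eval₂_add, eval₂_pow, eval₂_X, eval₂_C] at h
  have h2 : (AdjoinRoot.of ((X : Polynomial ℤ) ^ 2 + C (𝔇 : ℤ))) ((𝔇 : ℤ))
      = ((𝔇 : ℤ) : ZsqrtNeg 𝔇) := eq_intCast _ _
  rw [h2] at h
  linear_combination h

lemma toRmod_mul_eq_one {u v m k N : ℤ} (hN : N = u ^ 2 + (𝔇 : ℤ) * v ^ 2)
    (hk : m * N - 1 = (p : ℤ) * k) :
    toRmod 𝔇 p (m * u) (-(m * v)) * toRmod 𝔇 p u v = 1 := by
  set f : Polynomial ℤ := (X : Polynomial ℤ) ^ 2 + C (𝔇 : ℤ) with hf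
  unfold toRmod
  rw [← map_mul]
  have hprod : (((m * u : ℤ) : ZsqrtNeg 𝔇) + ((-(m * v) : ℤ) : ZsqrtNeg 𝔇) * AdjoinRoot.root f)
      * (((u : ℤ) : ZsqrtNeg 𝔇) + ((v : ℤ) : ZsqrtNeg 𝔇) * AdjoinRoot.root f)
      = ((m * N : ℤ) : ZsqrtNeg 𝔇) := by
    have hr := root_sq 𝔇
    push_cast
    rw [hN]
    push_cast at hr ⊢
    linear_combination (-(m : ZsqrtNeg 𝔇) * (v : ℤ) ^ 2) * hr
  rw [hprod]
  have hmN : ((m * N : ℤ) : ZsqrtNeg 𝔇) = 1 + ((p : ℕ) : ZsqrtNeg 𝔇) * ((k : ℤ) : ZsqrtNeg 𝔇) := by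
    have : (m * N : ℤ) = 1 + (p : ℤ) * k := by linarith
    rw [this]; push_cast; ring
  rw [hmN, map_add, map_one, map_mul]
  have hp0 : (Ideal.Quotient.mk (Ideal.span {((p : ℕ) : ZsqrtNeg 𝔇)})) ((p : ℕ) : ZsqrtNeg 𝔇) = 0 :=
    Ideal.Quotient.eq_zero_iff_mem.mpr (Ideal.mem_span_singleton_self _)
  rw [hp0, zero_mul, add_zero]

variable [Fact p.Prime]

lemma exists_inv (hns : ¬ IsSquare (-(𝔇 : ZMod p))) (a b : ZMod p)
    (hab : ¬ (a = 0 ∧ b = 0)) :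
    ∃ w : Rmod 𝔇 p, w * toRmod 𝔇 p (a.val : ℤ) (b.val : ℤ) = 1 := by
  set u : ℤ := (a.val : ℤ) with hu
  set v : ℤ := (b.val : ℤ) with hv
  set N : ℤ := u ^ 2 + (𝔇 : ℤ) * v ^ 2 with hNdef
  have hua : ((u : ℤ) : ZMod p) = a := by
    rw [hu]; push_cast; rw [ZMod.natCast_val, ZMod.cast_id]
  have hvb : ((v : ℤ) : ZMod p) = b := by
    rw [hv]; push_cast; rw [ZMod.natCast_val, ZMod.cast_id]
  have hN0 : ((N : ℤ) : ZMod p) ≠ 0 := by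
    rw [hNdef]
    push_cast
    rw [hua, hvb]
    intro h
    have := (qf_eq_zero_iff hns (a, b)).mp (by simpa [qf] using h)
    rw [Prod.ext_iff] at this
    exact hab ⟨this.1, this.2⟩
  set m : ℤ := ((((N : ℤ) : ZMod p))⁻¹.val : ℤ) with hm
  have hminv : ((m : ℤ) : ZMod p) = (((N : ℤ) : ZMod p))⁻¹ := by
    rw [hm]; push_cast; rw [ZMod.natCast_val, ZMod.cast_id]
  have hdvd : (p : ℤ) ∣ (m * N - 1) := by
    rw [← ZMod.intCast_zmod_eq_zero_iff_dvd]
    push_cast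
    rw [hminv]
    rw [inv_mul_cancel₀ hN0]
    ring
  obtain ⟨k, hk⟩ := hdvd
  exact ⟨toRmod 𝔇 p (m * u) (-(m * v)), toRmod_mul_eq_one 𝔇 p hNdef hk⟩

lemma isUnimodular_of_ne_zero (hns : ¬ IsSquare (-(𝔇 : ZMod p)))
    (v : ZMod p × ZMod p × ZMod p × ZMod p) (hv : v ≠ 0) : IsUnimodular 𝔇 p v := by
  by_cases hd : v.2.2.1 = 0 ∧ v.2.2.2 = 0
  · have hc : ¬ (v.1 = 0 ∧ v.2.1 = 0) := by
      intro hc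
      apply hv
      ext
      · exact hc.1
      · exact hc.2
      · exact hd.1
      · exact hd.2
    obtain ⟨w, hw⟩ := exists_inv 𝔇 p hns v.1 v.2.1 hc
    exact ⟨0, -w, by simpa using hw⟩
  · obtain ⟨w, hw⟩ := exists_inv 𝔇 p hns v.2.2.1 v.2.2.2 hd
    exact ⟨w, 0, by rw [zero_mul, sub_zero]; exact hw⟩

end Alg

/-- For `𝔇 ≥ 1`, an odd prime `p ∤ 𝔇` with `−𝔇` not a square mod `p`, and integers
`x, y, n` with `p ∤ n`: the number of unimodular quadruples in `(ℤ/pℤ)⁴` satisfying the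
congruence `A x² + B y² + C x + D y + E ≡ n (mod p)` equals `p³ − p`, and this count
divided by the total number `p⁴ − 1` of unimodular pairs equals `p/(p² + 1)`. -/
theorem unimodular_solution_count_nondiv (𝔇 : ℕ) (h𝔇 : 1 ≤ 𝔇) (p : ℕ) (hp : p.Prime)
    (hodd : Odd p) (hpD : ¬ p ∣ 𝔇) (hns : ¬ IsSquare (-(𝔇 : ZMod p)))
    (x y n : ℤ) (hn : ¬ ((p : ℤ) ∣ n)) :
    Nat.card {v : ZMod p × ZMod p × ZMod p × ZMod p //
        IsUnimodular 𝔇 p v ∧ QuadCongr 𝔇 p x y n v} = p ^ 3 - p ∧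
    (Nat.card {v : ZMod p × ZMod p × ZMod p × ZMod p //
        IsUnimodular 𝔇 p v ∧ QuadCongr 𝔇 p x y n v} : ℚ) / ((p : ℚ) ^ 4 - 1)
      = (p : ℚ) / ((p : ℚ) ^ 2 + 1) := by
  haveI : Fact p.Prime := ⟨hp⟩
  set δ : ZMod p := (𝔇 : ZMod p) with hδdef
  have hδ : δ ≠ 0 := by
    rw [hδdef, Ne, ZMod.natCast_eq_zero_iff]
    exact hpD
  set n' : ZMod p := (n : ZMod p) with hn'def
  have hn' : n' ≠ 0 := by
    rw [hn'def, Ne, ZMod.intCast_zmod_eq_zero_iff_dvd]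
    exact hn
  set x' : ZMod p := (x : ZMod p)
  set y' : ZMod p := (y : ZMod p)
  -- the unimodularity condition is implied by the congruence
  have hkey : ∀ v, (IsUnimodular 𝔇 p v ∧ QuadCongr 𝔇 p x y n v) ↔ QuadCongr 𝔇 p x y n v := by
    intro v
    refine ⟨And.right, fun h => ⟨?_, h⟩⟩
    apply isUnimodular_of_ne_zero 𝔇 p hns
    rintro rfl
    apply hn'
    unfold QuadCongr at h
    simpa using h.symm
  -- change of variables
  let Φ : (ZMod p × ZMod p × ZMod p × ZMod p) ≃ (ZMod p × ZMod p) × (ZMod p × ZMod p) :=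
    { toFun := fun v => ((v.1, v.2.1),
        (v.2.2.1 + v.1 * x' - δ * v.2.1 * y', v.2.2.2 + v.1 * y' + v.2.1 * x'))
      invFun := fun w => (w.1.1, w.1.2,
        w.2.1 - w.1.1 * x' + δ * w.1.2 * y', w.2.2 - w.1.1 * y' - w.1.2 * x')
      left_inv := fun v =>
        Prod.ext rfl (Prod.ext rfl (Prod.ext (by ring) (by ring)))
      right_inv := fun w =>
        Prod.ext (Prod.ext rfl rfl) (Prod.ext (by ring) (by ring)) }
  have hΦ : ∀ v, QuadCongr 𝔇 p x y n v ↔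
      (fun w : (ZMod p × ZMod p) × (ZMod p × ZMod p) => qf δ w.1 + qf δ w.2 = n') (Φ v) := by
    intro v
    show QuadCongr 𝔇 p x y n v ↔
      qf δ (v.1, v.2.1) + qf δ
        (v.2.2.1 + v.1 * x' - δ * v.2.1 * y', v.2.2.2 + v.1 * y' + v.2.1 * x') = n'
    unfold QuadCongr qf
    constructor
    · intro h; linear_combination h
    · intro h; linear_combination h
  have hcard : Nat.card {v : ZMod p × ZMod p × ZMod p × ZMod p //
      IsUnimodular 𝔇 p v ∧ QuadCongr 𝔇 p x y n v} = p ^ 3 - p := by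
    rw [Nat.card_congr (Equiv.subtypeEquivRight hkey)]
    rw [Nat.card_congr (Equiv.subtypeEquiv
      (q := fun w : (ZMod p × ZMod p) × (ZMod p × ZMod p) => qf δ w.1 + qf δ w.2 = n') Φ hΦ)]
    exact card_pairs hδ hns hn'
  refine ⟨hcard, ?_⟩
  rw [hcard]
  have hp2 : 2 ≤ p := hp.two_le
  have h2 : p ≤ p ^ 3 := Nat.le_self_pow (by norm_num) p
  have hcast : ((p ^ 3 - p : ℕ) : ℚ) = (p : ℚ) ^ 3 - (p : ℚ) := by
    rw [Nat.cast_sub h2]; push_cast; ring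
  rw [hcast]
  have hq2 : (2 : ℚ) ≤ (p : ℚ) := by exact_mod_cast hp2
  have hd1 : (p : ℚ) ^ 4 - 1 ≠ 0 := by nlinarith
  have hd2 : (p : ℚ) ^ 2 + 1 ≠ 0 := by nlinarith
  rw [div_eq_div_iff hd1 hd2]
  ring
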